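/- Let T be a bounded Fredholm operator of index 0 on a Banach space X with dim ker T = 1, ker T = span{h₀}. Let c ∈ X* with c(h₀) ≠ 0, and suppose b ∈ range T. Then the augmented operator T + b·c is NOT invertible; in fact it is Fredholm of index 0 with nontrivial kernel. -/

import Mathlib

open Module

/-- `T` is a Fredholm operator of index `0`. -/
def IsFredholmIdxZero {X Y : Type*} [NormedAddCommGroup X] [NormedSpace ℂ X]
    [NormedAddCommGroup Y] [NormedSpace ℂ Y] (T : X →L[ℂ] Y) : Prop :=
  FiniteDimensional ℂ (LinearMap.ker (T : X →ₗ[ℂ] Y)) ∧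
  IsClosed ((LinearMap.range (T : X →ₗ[ℂ] Y) : Submodule ℂ Y) : Set Y) ∧
  FiniteDimensional ℂ (Y ⧸ LinearMap.range (T : X →ₗ[ℂ] Y)) ∧
  finrank ℂ (LinearMap.ker (T : X →ₗ[ℂ] Y)) = finrank ℂ (Y ⧸ LinearMap.range (T : X →ₗ[ℂ] Y))

/-- If `T` is Fredholm of index 0 with one-dimensional kernel spanned by `h₀`,
`c(h₀) ≠ 0`, but `b ∈ range T`, then `T + b·c` is NOT invertible; in fact it is
Fredholm of index 0 with nontrivial kernel. -/
theorem stmt12 {X : Type*} [NormedAddCommGroup X] [NormedSpace ℂ X] [CompleteSpace X]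
    (T : X →L[ℂ] X) (hT : IsFredholmIdxZero T)
    (h₀ : X) (hh₀ : h₀ ≠ 0) (hker : LinearMap.ker (T : X →ₗ[ℂ] X) = Submodule.span ℂ {h₀})
    (c : X →L[ℂ] ℂ) (hc : c h₀ ≠ 0)
    (b : X) (hb : b ∈ LinearMap.range (T : X →ₗ[ℂ] X)) :
    ¬ Function.Bijective ⇑(T + c.smulRight b) ∧
    IsFredholmIdxZero (T + c.smulRight b) ∧
    LinearMap.ker ((T + c.smulRight b : X →L[ℂ] X) : X →ₗ[ℂ] X) ≠ ⊥ := by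
  obtain ⟨v, hv⟩ := hb
  replace hv : T v = b := hv
  have hSapp : ∀ x, (T + c.smulRight b) x = T x + c x • b := fun x => rfl
  have hSapp' : ∀ x, ((T + c.smulRight b : X →L[ℂ] X) : X →ₗ[ℂ] X) x = T x + c x • b := fun x => rfl
  have hh₀ker : T h₀ = 0 := by
    have : h₀ ∈ LinearMap.ker (T : X →ₗ[ℂ] X) := by
      rw [hker]; exact Submodule.mem_span_singleton_self h₀
    exact this
  -- range equality
  have hrange : LinearMap.range ((T + c.smulRight b : X →L[ℂ] X) : X →ₗ[ℂ] X) = LinearMap.range (T : X →ₗ[ℂ] X) := by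
    apply le_antisymm
    · rintro _ ⟨x, rfl⟩
      refine ⟨x + c x • v, ?_⟩
      rw [map_add, map_smul, ContinuousLinearMap.coe_coe, hv, hSapp']
    · rintro _ ⟨x, rfl⟩
      refine ⟨x - (c x / c h₀) • h₀, ?_⟩
      have h1 : c (x - (c x / c h₀) • h₀) = 0 := by
        rw [map_sub, map_smul, smul_eq_mul, div_mul_cancel₀ _ hc, sub_self]
      rw [hSapp', h1, zero_smul, add_zero, map_sub, map_smul, hh₀ker, smul_zero, sub_zero]; rfl
  -- kernel membership gives span coefficient
  have hkmem : ∀ y, (T + c.smulRight b) y = 0 → ∃ α : ℂ, y + c y • v = α • h₀ := by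
    intro y hy
    have hT0 : T (y + c y • v) = 0 := by
      rw [map_add, map_smul, hv, ← hSapp, hy]
    have : y + c y • v ∈ LinearMap.ker (T : X →ₗ[ℂ] X) := hT0
    rw [hker, Submodule.mem_span_singleton] at this
    obtain ⟨α, hα⟩ := this
    exact ⟨α, hα.symm⟩
  -- the kernel is spanned by a single nonzero vector
  obtain ⟨w, hw0, hwker⟩ : ∃ w : X, w ≠ 0 ∧
      LinearMap.ker ((T + c.smulRight b : X →L[ℂ] X) : X →ₗ[ℂ] X) = Submodule.span ℂ {w} := by
    by_cases hcv : 1 + c v = 0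
    · have hcv' : c v = -1 := by linear_combination hcv
      refine ⟨v, ?_, ?_⟩
      · intro h; rw [h, map_zero] at hcv'; exact one_ne_zero (neg_eq_zero.mp hcv'.symm)
      · apply le_antisymm
        · intro y hy
          obtain ⟨α, hα⟩ := hkmem y (LinearMap.mem_ker.mp hy)
          have hcy : c y * (1 + c v) = α * c h₀ := by
            have := congrArg c hα
            rw [map_add, map_smul, map_smul] at this
            simp only [smul_eq_mul] at this
            linear_combination this
          rw [hcv, mul_zero] at hcy
          have hα0 : α = 0 := by
            rcases mul_eq_zero.mp hcy.symm with h | h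
            · exact h
            · exact absurd h hc
          rw [hα0, zero_smul] at hα
          have : y = -(c y) • v := by
            rw [neg_smul]; exact eq_neg_of_add_eq_zero_left hα
          rw [this]
          exact Submodule.smul_mem _ _ (Submodule.mem_span_singleton_self v)
        · rw [Submodule.span_singleton_le_iff_mem, LinearMap.mem_ker, hSapp', hv, hcv',
            neg_smul, one_smul, add_neg_cancel]
    · set lam : ℂ := c h₀ / (1 + c v) with hlam
      have hlam0 : lam ≠ 0 := div_ne_zero hc hcv
      set w : X := h₀ - lam • v with hwdef
      have hcw : c w = lam := by
        rw [hwdef, map_sub, map_smul, smul_eq_mul]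
        rw [hlam]; field_simp
        ring
      refine ⟨w, ?_, ?_⟩
      · intro h; rw [h, map_zero] at hcw; exact hlam0 hcw.symm
      · apply le_antisymm
        · intro y hy
          obtain ⟨α, hα⟩ := hkmem y (LinearMap.mem_ker.mp hy)
          have hcy : c y * (1 + c v) = α * c h₀ := by
            have := congrArg c hα
            rw [map_add, map_smul, map_smul] at this
            simp only [smul_eq_mul] at this
            linear_combination this
          have hcy' : c y = α * lam := by
            rw [hlam]; field_simp; linear_combination hcy
          have : y = α • w := by
            rw [hwdef, smul_sub, smul_smul, ← hcy']
            exact eq_sub_of_add_eq hα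
          rw [this]
          exact Submodule.smul_mem _ _ (Submodule.mem_span_singleton_self w)
        · rw [Submodule.span_singleton_le_iff_mem, LinearMap.mem_ker, hSapp', hcw, hwdef,
            map_sub, map_smul, hh₀ker, hv, zero_sub, neg_add_cancel]
  have hSw : (T + c.smulRight b) w = 0 := by
    have : w ∈ LinearMap.ker ((T + c.smulRight b : X →L[ℂ] X) : X →ₗ[ℂ] X) := by
      rw [hwker]; exact Submodule.mem_span_singleton_self w
    exact this
  have hTker1 : finrank ℂ (LinearMap.ker (T : X →ₗ[ℂ] X)) = 1 := by
    rw [hker]; exact finrank_span_singleton hh₀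
  refine ⟨?_, ⟨?_, ?_, ?_, ?_⟩, ?_⟩
  · intro hbij
    exact hw0 (hbij.1 (by rw [hSw, map_zero]))
  · rw [hwker]
    exact FiniteDimensional.span_of_finite ℂ (Set.finite_singleton w)
  · rw [hrange]; exact hT.2.1
  · rw [hrange]; exact hT.2.2.1
  · rw [hwker, hrange, finrank_span_singleton hw0, ← hT.2.2.2]
    exact hTker1.symm
  · rw [hwker]
    simpa [Submodule.span_singleton_eq_bot] using hw0
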